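/- Σ_{n=1}^{∞} H_n² / n³ = - ∫₀¹ ∫₀¹ log(1 - (1-t)(1-u)) · (log t)(log u) / ((1-t)(1-u)) dt du, where H_n = Σ_{k=1}^n 1/k is the n-th harmonic number. -/

import Mathlib

open Real MeasureTheory Set intervalIntegral

set_option maxHeartbeats 1000000

/-- The n-th harmonic number `H_n = ∑_{k=1}^n 1/k`. -/
noncomputable def H (n : ℕ) : ℝ := ∑ k ∈ Finset.Icc 1 n, (1 : ℝ) / k

lemma neg_log_integrable : IntegrableOn (fun x : ℝ => -Real.log x) (Ioc (0:ℝ) 1) volume := by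
  have := integrableOn_deriv_of_nonneg (g := fun x : ℝ => x - x * Real.log x)
    (g' := fun x : ℝ => -Real.log x) (a := 0) (b := 1)
    (by exact (continuous_id.sub Real.continuous_mul_log).continuousOn)
    (fun x hx => by
      have h1 : HasDerivAt (fun x : ℝ => x * Real.log x) (Real.log x + 1) x :=
        Real.hasDerivAt_mul_log (ne_of_gt hx.1)
      have h2 := (hasDerivAt_id x).sub h1
      exact h2.congr_deriv (by ring))
    (fun x hx => by
      have := Real.log_nonpos (le_of_lt hx.1) (le_of_lt hx.2)
      show 0 ≤ -Real.log x
      linarith)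
  exact this

lemma pow_log_integrableOn (n : ℕ) :
    IntegrableOn (fun t : ℝ => (1-t)^n * Real.log t) (Ioc (0:ℝ) 1) volume := by
  apply Integrable.mono neg_log_integrable
  · exact (((measurable_const.sub measurable_id).pow_const n).mul Real.measurable_log).aestronglyMeasurable
  · filter_upwards [ae_restrict_mem measurableSet_Ioc] with t ht
    have h0 : 0 ≤ 1 - t := by linarith [ht.2]
    have h1 : 1 - t ≤ 1 := by linarith [ht.1]
    have hp : (1-t)^n ≤ 1 := pow_le_one₀ h0 h1
    have hpn : 0 ≤ (1-t)^n := pow_nonneg h0 n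
    rw [Real.norm_eq_abs, Real.norm_eq_abs, abs_mul, abs_neg, abs_of_nonneg hpn]
    nlinarith [abs_nonneg (Real.log t)]


lemma Hsum (n : ℕ) : H (n+1) = ∑ k ∈ Finset.range (n+1), (1:ℝ)/(k+1) := by
  induction n with
  | zero => simp [H]
  | succ m ih =>
    rw [H, Finset.sum_Icc_succ_top (by omega : 1 ≤ m+1+1), ← H, ih,
      Finset.sum_range_succ (fun k => (1:ℝ)/(k+1)) (m+1)]
    congr 1
    push_cast
    ring


lemma key_int (n : ℕ) :
    ∫ t in Ioc (0:ℝ) 1, (1-t)^n * Real.log t = -(H (n+1))/(n+1) := by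
  have hm : ((n:ℝ)+1) ≠ 0 := by positivity
  set P : ℝ → ℝ := fun t => (1 - (1-t)^(n+1))/(n+1) with hP
  set Q : ℝ → ℝ := fun t => (∑ k ∈ Finset.range (n+1), (1-t)^k)/(n+1) with hQ
  set G : ℝ → ℝ := fun t => ∑ k ∈ Finset.range (n+1), (1 - (1-t)^(k+1))/(((k:ℝ)+1)*((n:ℝ)+1)) with hG
  set F : ℝ → ℝ := fun t => P t * Real.log t - G t with hF
  have hPQ : ∀ t : ℝ, P t = t * Q t := by
    intro t
    have h := geom_sum_mul (1-t) (n+1)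
    simp only [hP, hQ]
    have h2 : (1:ℝ) - (1-t)^(n+1) = t * ∑ k ∈ Finset.range (n+1), (1-t)^k := by
      linear_combination h
    rw [h2, mul_div_assoc]
  have hFcont : Continuous F := by
    have : F = fun t => (t * Real.log t) * Q t - G t := by
      funext t; rw [hF]; simp only []; rw [hPQ]; ring
    rw [this]
    apply Continuous.sub
    · exact Real.continuous_mul_log.mul ((continuous_finset_sum _ fun k _ =>
        (continuous_const.sub continuous_id).pow k).div_const _)
    · exact continuous_finset_sum _ fun k _ =>
        (continuous_const.sub ((continuous_const.sub continuous_id).pow (k+1))).div_const _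
  have hFderiv : ∀ t ∈ Ioo (0:ℝ) 1, HasDerivAt F ((1-t)^n * Real.log t) t := by
    intro t ht
    have hpow : HasDerivAt (fun t : ℝ => (1-t)^(n+1)) (((n:ℝ)+1) * (1-t)^n * (-1)) t := by
      have h1 : HasDerivAt (fun t : ℝ => 1 - t) (-1) t := (hasDerivAt_id t).const_sub 1
      have := h1.pow (n+1)
      exact this.congr_deriv (by simp)
    have hPd : HasDerivAt P ((1-t)^n) t := by
      have := (hpow.const_sub 1).div_const ((n:ℝ)+1)
      convert this using 1
      · rfl
      · rfl
      field_simp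
    have hlog : HasDerivAt Real.log t⁻¹ t := Real.hasDerivAt_log (ne_of_gt ht.1)
    have hPL : HasDerivAt (fun t => P t * Real.log t) ((1-t)^n * Real.log t + P t * t⁻¹) t :=
      hPd.mul hlog
    have hGd : HasDerivAt G (Q t) t := by
      have hterm : ∀ k ∈ Finset.range (n+1), HasDerivAt
          (fun t : ℝ => (1 - (1-t)^(k+1))/(((k:ℝ)+1)*((n:ℝ)+1))) ((1-t)^k/((n:ℝ)+1)) t := by
        intro k _
        have h1 : HasDerivAt (fun t : ℝ => 1 - t) (-1) t := (hasDerivAt_id t).const_sub 1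
        have h2 := (h1.pow (k+1)).const_sub 1
        have h3 := h2.div_const (((k:ℝ)+1)*((n:ℝ)+1))
        convert h3 using 1
        · rfl
        · rfl
        · rfl
        have hk : ((k:ℝ)+1) ≠ 0 := by positivity
        push_cast [Nat.add_sub_cancel]
        field_simp
      have := HasDerivAt.sum hterm
      convert this using 1
      · rfl
      · rfl
      · funext x; exact (Finset.sum_apply (M := fun _ : ℝ => ℝ) x (Finset.range (n+1))
          (fun i t => (1 - (1 - t) ^ (i + 1)) / (((i:ℝ) + 1) * ((n:ℝ) + 1)))).symm
      rw [hQ]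
      simp only []
      rw [Finset.sum_div]
    have htot := hPL.sub hGd
    convert htot using 1
    · rfl
    · rfl
    · rfl
    have hPt : P t * t⁻¹ = Q t := by
      rw [hPQ t, mul_comm t (Q t), mul_assoc, mul_inv_cancel₀ (ne_of_gt ht.1), mul_one]
    rw [hPt]
    ring
  have hF0 : F 0 = 0 := by
    simp [hF, hP, hG]
  have hF1 : F 1 = -(H (n+1))/((n:ℝ)+1) := by
    have : F 1 = -G 1 := by simp [hF, hP]
    rw [this, hG, Hsum, neg_div]
    congr 1
    simp only [sub_self, zero_pow (Nat.succ_ne_zero _), sub_zero]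
    rw [Finset.sum_div]
    refine Finset.sum_congr rfl fun k _ => ?_
    rw [div_div]
  have hint : IntervalIntegrable (fun t : ℝ => (1-t)^n * Real.log t) volume 0 1 := by
    rw [intervalIntegrable_iff_integrableOn_Ioc_of_le zero_le_one]
    exact pow_log_integrableOn n
  have := integral_eq_sub_of_hasDeriv_right_of_le zero_le_one hFcont.continuousOn
    (fun x hx => (hFderiv x hx).hasDerivWithinAt) hint
  rw [← integral_of_le zero_le_one, this, hF1, hF0, sub_zero]


lemma Hnonneg (n : ℕ) : 0 ≤ H n :=
  Finset.sum_nonneg fun k _ => by positivity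

lemma Hrec (n : ℕ) : H (n+1) = H n + 1/((n:ℝ)+1) := by
  rw [H, Finset.sum_Icc_succ_top (by omega : 1 ≤ n+1), ← H]
  push_cast
  ring

lemma Hsqrt (n : ℕ) : H n ≤ 2 * Real.sqrt n := by
  induction n with
  | zero => simp [H]
  | succ m ih =>
    rw [Hrec]
    have hs : Real.sqrt m ≤ Real.sqrt (m+1) := by
      apply Real.sqrt_le_sqrt; push_cast; linarith
    have h1 : Real.sqrt (m+1) ^ 2 = (m:ℝ)+1 := by
      rw [Real.sq_sqrt]; push_cast [Nat.cast_add]; ring_nf; positivity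
    have h2 : (1:ℝ) ≤ Real.sqrt (m+1) := by
      nlinarith [Real.sqrt_nonneg ((m:ℝ)+1), Nat.cast_nonneg (α := ℝ) m]
    have h3 : Real.sqrt m ^ 2 = (m:ℝ) := Real.sq_sqrt (by positivity)
    have key : 1/((m:ℝ)+1) ≤ 2 * (Real.sqrt (m+1) - Real.sqrt m) := by
      rw [div_le_iff₀ (by positivity)]
      nlinarith [Real.sqrt_nonneg m, Real.sqrt_nonneg (m+1)]
    have : ((m:ℝ)+1) = ((m+1 : ℕ) : ℝ) := by push_cast; ring
    calc H m + 1/((m:ℝ)+1) ≤ 2 * Real.sqrt m + 2*(Real.sqrt (m+1) - Real.sqrt m) := by linarith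
    _ = 2 * Real.sqrt (m+1) := by ring
    _ = 2 * Real.sqrt ((m+1:ℕ):ℝ) := by rw [this]

lemma H_le (n : ℕ) : H n ≤ n := by
  induction n with
  | zero => simp [H]
  | succ m ih =>
    rw [Hrec]
    push_cast
    have : 1/((m:ℝ)+1) ≤ 1 := by
      rw [div_le_one (by positivity)]; linarith [Nat.cast_nonneg (α := ℝ) m]
    linarith

lemma summable_main : Summable (fun n : ℕ => H (n+1)^2/((n:ℝ)+1)^3) := by
  have hb : ∀ n : ℕ, H (n+1)^2/((n:ℝ)+1)^3 ≤ 4/((n:ℝ)+1)^2 := by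
    intro n
    have h1 : H (n+1) ≤ 2 * Real.sqrt ((n:ℝ)+1) := by
      have := Hsqrt (n+1); push_cast at this ⊢; linarith
    have h2 : Real.sqrt ((n:ℝ)+1) ^ 2 = (n:ℝ)+1 := Real.sq_sqrt (by positivity)
    have h3 : H (n+1)^2 ≤ 4 * ((n:ℝ)+1) := by
      nlinarith [Hnonneg (n+1), Real.sqrt_nonneg ((n:ℝ)+1)]
    rw [div_le_div_iff₀ (by positivity) (by positivity)]
    nlinarith [pow_pos (show (0:ℝ) < (n:ℝ)+1 by positivity) 2]
  apply Summable.of_nonneg_of_le (fun n => by positivity) hb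
  have : Summable (fun n : ℕ => 1/((n:ℝ)+1)^2) := by
    have := Real.summable_one_div_nat_pow.mpr (show 1 < 2 by norm_num)
    exact_mod_cast (summable_nat_add_iff 1).mpr this
  simpa [div_eq_mul_inv] using this.mul_left 4

lemma hasSum_aux {z : ℝ} (h0 : 0 < z) (h1 : z < 1) (c : ℝ) :
    HasSum (fun n : ℕ => z^n/((n:ℝ)+1) * c) (-Real.log (1-z)/z * c) := by
  have habs : |z| < 1 := by rw [abs_of_pos h0]; exact h1
  have h := ((Real.hasSum_pow_div_log_of_abs_lt_one habs).div_const z).mul_right c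
  convert h using 2 with n
  · rfl
  rw [pow_succ]
  field_simp



noncomputable def J (t u : ℝ) : ℝ :=
  -(Real.log (1 - (1-t)*(1-u)) * (Real.log t * Real.log u) / ((1-t)*(1-u)))

noncomputable def g (n : ℕ) (u : ℝ) : ℝ :=
  H (n+1)/((n:ℝ)+1)^2 * ((1-u)^n * (-Real.log u))

lemma neg_log_nonneg {u : ℝ} (h0 : 0 < u) (h1 : u ≤ 1) : 0 ≤ -Real.log u := by
  have := Real.log_nonpos (le_of_lt h0) h1
  linarith

lemma pow_log_value (n : ℕ) :
    ∫ t in Ioc (0:ℝ) 1, (1-t)^n * (-Real.log t) = H (n+1)/((n:ℝ)+1) := by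
  have h : (fun t : ℝ => (1-t)^n * (-Real.log t)) = fun t => -((1-t)^n * Real.log t) := by
    funext t; ring
  rw [h, MeasureTheory.integral_neg, key_int]
  push_cast
  ring

lemma stepA {u : ℝ} (hu : u ∈ Ioo (0:ℝ) 1) :
    ∫ t in Ioc (0:ℝ) 1, J t u = ∑' n : ℕ, g n u := by
  set f : ℕ → ℝ → ℝ := fun n t => ((1-t)*(1-u))^n/((n:ℝ)+1) * (Real.log t * Real.log u) with hf
  have hu0 : 0 < 1 - u := by linarith [hu.2]
  have hu1 : 1 - u < 1 := by linarith [hu.1]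
  -- pointwise equality on Ioc
  have hpt : ∀ t ∈ Ioc (0:ℝ) 1, J t u = ∑' n, f n t := by
    intro t ht
    rcases eq_or_lt_of_le ht.2 with h1 | h1
    · subst h1
      have hJ : J 1 u = 0 := by simp [J]
      have hfn : ∀ n, f n 1 = 0 := by intro n; simp [hf]
      rw [hJ]
      simp only [hfn, tsum_zero]
    · have hz0 : 0 < (1-t)*(1-u) := by
        have : 0 < 1 - t := by linarith
        positivity
      have hz1 : (1-t)*(1-u) < 1 := by nlinarith [ht.1, hu.1]
      have hs := hasSum_aux hz0 hz1 (Real.log t * Real.log u)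
      rw [hs.tsum_eq, J]
      field_simp
  rw [setIntegral_congr_fun measurableSet_Ioc hpt]
  -- interchange
  have hfc : ∀ n : ℕ, f n = fun t => ((1-u)^n/((n:ℝ)+1) * Real.log u) * ((1-t)^n * Real.log t) := by
    intro n; funext t; rw [hf]; simp only []; rw [mul_pow]; ring
  have hint : ∀ n : ℕ, Integrable (f n) (volume.restrict (Ioc (0:ℝ) 1)) := by
    intro n; rw [hfc n]; exact (pow_log_integrableOn n).const_mul _
  have hK : ∀ n : ℕ, ∫ t in Ioc (0:ℝ) 1, ‖f n t‖ ≤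
      ((1-u)^n * |Real.log u|) * ∫ t in Ioc (0:ℝ) 1, -Real.log t := by
    intro n
    rw [← MeasureTheory.integral_const_mul]
    apply setIntegral_mono_on ((hint n).norm) (neg_log_integrable.const_mul _) measurableSet_Ioc
    intro t ht
    rw [hfc n]
    have h0t : 0 ≤ 1 - t := by linarith [ht.2]
    have h1t : 1 - t ≤ 1 := by linarith [ht.1]
    have hlt : 0 ≤ -Real.log t := neg_log_nonneg ht.1 ht.2
    simp only [norm_mul, Real.norm_eq_abs]
    rw [abs_div]
    have e1 : |(1-t)^n| ≤ 1 := by rw [abs_of_nonneg (pow_nonneg h0t n)]; exact pow_le_one₀ h0t h1t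
    have e2 : |(1-u)^n| = (1-u)^n := abs_of_nonneg (pow_nonneg (le_of_lt hu0) n)
    have e3 : |Real.log t| = -Real.log t := abs_of_nonpos (by linarith)
    have e4 : |((n:ℝ)+1)| ≥ 1 := by rw [abs_of_nonneg (by positivity)]; linarith [Nat.cast_nonneg (α := ℝ) n]
    have e5 : (0:ℝ) < |((n:ℝ)+1)| := by linarith
    rw [e2, e3]
    have : (1-u)^n / |((n:ℝ)+1)| ≤ (1-u)^n := by
      rw [div_le_iff₀ e5]; nlinarith [pow_nonneg (le_of_lt hu0) n]
    calc (1-u)^n / |(n:ℝ)+1| * |Real.log u| * (|(1-t)^n| * (-Real.log t))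
        ≤ (1-u)^n * |Real.log u| * (1 * (-Real.log t)) := by
          apply mul_le_mul
          · exact mul_le_mul_of_nonneg_right this (abs_nonneg _)
          · exact mul_le_mul_of_nonneg_right e1 hlt
          · positivity
          · positivity
      _ = (1-u)^n * |Real.log u| * (-Real.log t) := by ring
  have hsum : Summable fun n : ℕ => ∫ t in Ioc (0:ℝ) 1, ‖f n t‖ := by
    apply Summable.of_nonneg_of_le (fun n => integral_nonneg (fun t => norm_nonneg _)) hK
    have := (summable_geometric_of_lt_one (le_of_lt hu0) hu1).mul_right
      (|Real.log u| * ∫ t in Ioc (0:ℝ) 1, -Real.log t)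
    simpa [mul_assoc] using this
  rw [← MeasureTheory.integral_tsum_of_summable_integral_norm hint hsum]
  apply tsum_congr
  intro n
  rw [hfc n, MeasureTheory.integral_const_mul, key_int, g]
  push_cast
  field_simp

lemma g_integrable (n : ℕ) : Integrable (g n) (volume.restrict (Ioc (0:ℝ) 1)) := by
  have h : g n = fun u => (H (n+1)/((n:ℝ)+1)^2) * (-((1-u)^n * Real.log u)) := by
    funext u; rw [g]; ring
  rw [h]
  exact ((pow_log_integrableOn n).neg).const_mul _

lemma g_value (n : ℕ) : ∫ u in Ioc (0:ℝ) 1, g n u = H (n+1)^2/((n:ℝ)+1)^3 := by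
  have h : (fun u : ℝ => g n u) = fun u => (H (n+1)/((n:ℝ)+1)^2) * ((1-u)^n * (-Real.log u)) := by
    funext u; rw [g]
  rw [h, MeasureTheory.integral_const_mul, pow_log_value]
  field_simp

lemma g_norm_value (n : ℕ) :
    ∫ u in Ioc (0:ℝ) 1, ‖g n u‖ = H (n+1)^2/((n:ℝ)+1)^3 := by
  rw [← g_value n]
  apply setIntegral_congr_fun measurableSet_Ioc
  intro u hu
  apply Real.norm_of_nonneg
  have h1 : 0 ≤ (1-u)^n := pow_nonneg (by linarith [hu.2]) n
  have h2 : 0 ≤ -Real.log u := neg_log_nonneg hu.1 hu.2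
  have h3 : 0 ≤ H (n+1)/((n:ℝ)+1)^2 := div_nonneg (Hnonneg _) (by positivity)
  rw [g]
  exact mul_nonneg h3 (mul_nonneg h1 h2)

lemma stepB :
    ∫ u in Ioc (0:ℝ) 1, (∫ t in Ioc (0:ℝ) 1, J t u) =
      ∑' n : ℕ, H (n+1)^2/((n:ℝ)+1)^3 := by
  have hpt : ∀ u ∈ Ioc (0:ℝ) 1, (∫ t in Ioc (0:ℝ) 1, J t u) = ∑' n, g n u := by
    intro u hu
    rcases eq_or_lt_of_le hu.2 with h1 | h1
    · subst h1
      have hJ : ∀ t : ℝ, J t 1 = 0 := by intro t; simp [J]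
      have hg : ∀ n : ℕ, g n (1:ℝ) = 0 := by intro n; simp [g]
      simp only [hJ, hg, MeasureTheory.integral_zero, tsum_zero]
    · exact stepA ⟨hu.1, h1⟩
  rw [setIntegral_congr_fun measurableSet_Ioc hpt]
  have hsum : Summable fun n : ℕ => ∫ u in Ioc (0:ℝ) 1, ‖g n u‖ :=
    summable_main.congr fun n => (g_norm_value n).symm
  rw [← MeasureTheory.integral_tsum_of_summable_integral_norm g_integrable hsum]
  exact tsum_congr fun n => g_value n

theorem stmt_18 :
    ∑' n : ℕ, (H (n + 1)) ^ 2 / ((n : ℝ) + 1) ^ 3 =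
      -∫ u in (0:ℝ)..1, ∫ t in (0:ℝ)..1,
        Real.log (1 - (1 - t) * (1 - u)) * (Real.log t * Real.log u) /
          ((1 - t) * (1 - u)) := by
  have h2 : (∫ u in (0:ℝ)..1, ∫ t in (0:ℝ)..1,
        Real.log (1 - (1 - t) * (1 - u)) * (Real.log t * Real.log u) /
          ((1 - t) * (1 - u)))
      = -∫ u in Ioc (0:ℝ) 1, ∫ t in Ioc (0:ℝ) 1, J t u := by
    rw [integral_of_le zero_le_one, ← MeasureTheory.integral_neg]
    apply setIntegral_congr_fun measurableSet_Ioc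
    intro u _
    dsimp only
    rw [integral_of_le zero_le_one, ← MeasureTheory.integral_neg]
    apply setIntegral_congr_fun measurableSet_Ioc
    intro t _
    simp [J]
  rw [h2, neg_neg, stepB]
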